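/- Let (G, δ, ‖·‖) be a locally compact normed group with dilatations. Then the homogenized norm ‖x‖^N = lim_{ε→0+} (1/ε)‖δ_ε x‖ satisfies, for all x, y ∈ G and all η > 0: ‖δ_η x‖^N = η · ‖x‖^N; ‖β(x, y)‖^N ≤ ‖x‖^N + ‖y‖^N; and ‖x⁻¹‖^N = ‖x‖^N. -/

import Mathlib

open Filter Topology

/-- For a locally compact normed group with dilatations
`(G, δ, ‖·‖)`, the homogenized norm `‖x‖^N = lim_{ε→0+} (1/ε)‖δ_ε x‖` satisfies,
for all `x, y ∈ G` and all `η > 0`: `‖δ_η x‖^N = η·‖x‖^N`,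
`‖β(x,y)‖^N ≤ ‖x‖^N + ‖y‖^N`, and `‖x⁻¹‖^N = ‖x‖^N`. -/
theorem homogeneous_norm_properties
    {G : Type*} [Group G] [UniformSpace G] [IsUniformGroup G]
    [LocallyCompactSpace G] [T2Space G]
    (δ : ℝ → G → G)
    (hδcont : ∀ ε : ℝ, 0 < ε → Continuous (δ ε))
    (hcomp : ∀ ε μ : ℝ, 0 < ε → 0 < μ → ∀ x : G, δ ε (δ μ x) = δ (ε * μ) x)
    (hone : ∀ x : G, δ 1 x = x)
    (hH0 : ∀ K : Set G, IsCompact K →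
      TendstoUniformlyOn (fun (ε : ℝ) (x : G) => δ ε x) (fun _ => (1 : G))
        (𝓝[>] (0 : ℝ)) K)
    (β : G → G → G)
    (hH1 : ∀ K : Set (G × G), IsCompact K →
      TendstoUniformlyOn (fun (ε : ℝ) (p : G × G) => δ ε⁻¹ (δ ε p.1 * δ ε p.2))
        (fun p => β p.1 p.2) (𝓝[>] (0 : ℝ)) K)
    (hH2 : ∀ K : Set G, IsCompact K →
      TendstoUniformlyOn (fun (ε : ℝ) (x : G) => δ ε⁻¹ ((δ ε x)⁻¹)) (fun x => x⁻¹)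
        (𝓝[>] (0 : ℝ)) K)
    (nrm : G → ℝ) (hncont : Continuous nrm)
    (hnonneg : ∀ x : G, 0 ≤ nrm x)
    (hzero : ∀ x : G, nrm x = 0 ↔ x = 1)
    (hsub : ∀ x y : G, nrm (x * y) ≤ nrm x + nrm y)
    (hsymm : ∀ x : G, nrm x⁻¹ = nrm x)
    (nrmN : G → ℝ)
    (hnrmN : ∀ K : Set G, IsCompact K →
      TendstoUniformlyOn (fun (ε : ℝ) (x : G) => (1 / ε) * nrm (δ ε x)) nrmN
        (𝓝[>] (0 : ℝ)) K)
    (hnrmN0 : ∀ x : G, nrmN x = 0 → x = 1) :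
    ∀ x y : G, ∀ η : ℝ, 0 < η →
      nrmN (δ η x) = η * nrmN x ∧
      nrmN (β x y) ≤ nrmN x + nrmN y ∧
      nrmN x⁻¹ = nrmN x := by

  intro x y η hη
  have hev : ∀ᶠ ε in 𝓝[>] (0:ℝ), 0 < ε := eventually_mem_nhdsWithin
  have hpt : ∀ z : G, Tendsto (fun ε : ℝ => (1/ε) * nrm (δ ε z)) (𝓝[>] (0:ℝ)) (𝓝 (nrmN z)) :=
    fun z => (hnrmN {z} isCompact_singleton).tendsto_at (Set.mem_singleton z)
  have hδδ : ∀ ε : ℝ, 0 < ε → ∀ z : G, δ ε (δ ε⁻¹ z) = z := by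
    intro ε hε z
    rw [hcomp ε ε⁻¹ hε (inv_pos.mpr hε), mul_inv_cancel₀ hε.ne', hone]
  have hcontN : ∀ K : Set G, IsCompact K → ContinuousOn nrmN K := by
    intro K hK
    refine (hnrmN K hK).continuousOn (Eventually.frequently ?_)
    filter_upwards [hev] with ε hε
    exact (continuous_const.mul (hncont.comp (hδcont ε hε))).continuousOn
  refine ⟨?_, ?_, ?_⟩
  · -- homogeneity
    have hmul : Tendsto (fun ε : ℝ => ε * η) (𝓝[>] (0:ℝ)) (𝓝[>] (0:ℝ)) := by
      refine tendsto_nhdsWithin_of_tendsto_nhds_of_eventually_within _ ?_ ?_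
      · have h : Tendsto (fun ε : ℝ => ε * η) (𝓝 (0:ℝ)) (𝓝 (0 * η)) :=
          Filter.tendsto_id.mul_const η
        rw [zero_mul] at h
        exact h.mono_left nhdsWithin_le_nhds
      · filter_upwards [hev] with ε hε
        exact mul_pos hε hη
    have h1 := ((hpt x).comp hmul).const_mul η
    have h2 : Tendsto (fun ε : ℝ => (1/ε) * nrm (δ ε (δ η x))) (𝓝[>] (0:ℝ)) (𝓝 (η * nrmN x)) := by
      refine h1.congr' ?_
      filter_upwards [hev] with ε hε
      simp only [Function.comp]
      rw [hcomp ε η hε hη]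
      field_simp
    exact tendsto_nhds_unique (hpt (δ η x)) h2
  · -- subadditivity
    obtain ⟨K, hKc, hKn⟩ := exists_compact_mem_nhds (β x y)
    set w : ℝ → G := fun ε => δ ε⁻¹ (δ ε x * δ ε y) with hw
    have hwlim : Tendsto w (𝓝[>] (0:ℝ)) (𝓝 (β x y)) := by
      have := (hH1 {(x, y)} isCompact_singleton).tendsto_at (Set.mem_singleton (x, y))
      exact this
    have hwK : Tendsto w (𝓝[>] (0:ℝ)) (𝓝[K] (β x y)) :=
      tendsto_nhdsWithin_iff.mpr ⟨hwlim, hwlim.eventually_mem hKn⟩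
    have hc : Tendsto (fun ε : ℝ => (1/ε) * nrm (δ ε (w ε))) (𝓝[>] (0:ℝ)) (𝓝 (nrmN (β x y))) :=
      (hnrmN K hKc).tendsto_comp (hcontN K hKc (β x y) (mem_of_mem_nhds hKn)) hwK
    have hsumlim : Tendsto (fun ε : ℝ => (1/ε) * nrm (δ ε x) + (1/ε) * nrm (δ ε y))
        (𝓝[>] (0:ℝ)) (𝓝 (nrmN x + nrmN y)) := (hpt x).add (hpt y)
    refine le_of_tendsto_of_tendsto hc hsumlim ?_
    filter_upwards [hev] with ε hε
    have h1 : δ ε (w ε) = δ ε x * δ ε y := hδδ ε hε _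
    have h2 : (0:ℝ) ≤ 1/ε := by positivity
    calc (1/ε) * nrm (δ ε (w ε)) = (1/ε) * nrm (δ ε x * δ ε y) := by rw [h1]
      _ ≤ (1/ε) * (nrm (δ ε x) + nrm (δ ε y)) := by
          exact mul_le_mul_of_nonneg_left (hsub _ _) h2
      _ = (1/ε) * nrm (δ ε x) + (1/ε) * nrm (δ ε y) := by ring
  · -- symmetry
    obtain ⟨K, hKc, hKn⟩ := exists_compact_mem_nhds (x⁻¹ : G)
    set z : ℝ → G := fun ε => δ ε⁻¹ ((δ ε x)⁻¹) with hz
    have hzlim : Tendsto z (𝓝[>] (0:ℝ)) (𝓝 x⁻¹) :=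
      (hH2 {x} isCompact_singleton).tendsto_at (Set.mem_singleton x)
    have hzK : Tendsto z (𝓝[>] (0:ℝ)) (𝓝[K] x⁻¹) :=
      tendsto_nhdsWithin_iff.mpr ⟨hzlim, hzlim.eventually_mem hKn⟩
    have hc : Tendsto (fun ε : ℝ => (1/ε) * nrm (δ ε (z ε))) (𝓝[>] (0:ℝ)) (𝓝 (nrmN x⁻¹)) :=
      (hnrmN K hKc).tendsto_comp (hcontN K hKc x⁻¹ (mem_of_mem_nhds hKn)) hzK
    have hc' : Tendsto (fun ε : ℝ => (1/ε) * nrm (δ ε x)) (𝓝[>] (0:ℝ)) (𝓝 (nrmN x⁻¹)) := by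
      refine hc.congr' ?_
      filter_upwards [hev] with ε hε
      rw [hδδ ε hε, hsymm]
    exact tendsto_nhds_unique hc' (hpt x)
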